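/- Let k be a field and f a k-linear endomorphism of V = k((t)). Suppose n₁ ≤ m₁ and n₂ ≤ m₂ are integers such that, for each i = 1, 2, the range of f is contained in the standard lattice L_{n_i} and L_{m_i} is contained in the kernel of f. Then f induces k-linear endomorphisms f̄_i of the finite-dimensional quotient spaces L_{n_i}/L_{m_i}, and the ordinary traces agree: trace(f̄₁) = trace(f̄₂). Consequently the Tate trace τ(f), defined as the trace of the endomorphism induced by f on L_n/L_m for any integers n ≤ m with range f ⊆ L_n and L_m ⊆ ker f, is well defined. -/

import Mathlib

open HahnSeries

section AbstractQuotient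

variable {k : Type*} [Field k] {V : Type*} [AddCommGroup V] [Module k V]

/-- The endomorphism induced on the quotient `p / q` (realized as `↥p ⧸ q ∩ p`) by an
endomorphism `f` whose range is contained in `p` and which vanishes on `q`. -/
noncomputable def inducedQuotientEndo (f : Module.End k V) (p q : Submodule k V)
    (hr : ∀ v : V, f v ∈ p) (hk : ∀ v ∈ q, f v = 0) :
    Module.End k (↥p ⧸ q.comap p.subtype) :=
  Submodule.mapQ _ _ (f.restrict (fun v _ => hr v)) (by
    intro x hx
    have hfx : f (x : V) = 0 := hk _ (Submodule.mem_comap.mp hx)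
    simp only [Submodule.mem_comap, LinearMap.restrict_apply]
    show f (x : V) ∈ q
    rw [hfx]
    exact q.zero_mem)

/-- The quotient `p / q` (realized as `↥p ⧸ q ∩ p`) is a finite-dimensional
`k`-vector space. -/
abbrev QuotFiniteDimensional (p q : Submodule k V) : Prop :=
  FiniteDimensional k (↥p ⧸ q.comap p.subtype)

end AbstractQuotient

variable (k : Type*) [Field k]

/-- The standard lattice `L n ⊆ k((t))`: Laurent series whose coefficients vanish in
all degrees `< n`.  In particular `L 0 = k[[t]]`. -/
def standardLattice (n : ℤ) : Submodule k (LaurentSeries k) where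
  carrier := {f | ∀ m : ℤ, m < n → f.coeff m = 0}
  add_mem' := by
    intro a b ha hb m hm
    simp [HahnSeries.coeff_add, ha m hm, hb m hm]
  zero_mem' := by intro m hm; simp
  smul_mem' := by
    intro c a ha m hm
    simp [HahnSeries.coeff_smul, ha m hm]

section Helpers

variable {K : Type*} [Field K]

lemma mem_standardLattice {n : ℤ} {v : LaurentSeries K} :
    v ∈ standardLattice K n ↔ ∀ m : ℤ, m < n → v.coeff m = 0 := Iff.rfl

lemma single_mem_standardLattice {n i : ℤ} (h : n ≤ i) :
    (HahnSeries.single i (1 : K)) ∈ standardLattice K n := by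
  intro j hj
  exact HahnSeries.coeff_single_of_ne (by omega)

noncomputable def coeffMap (n m : ℤ) :
    ↥(standardLattice K n) →ₗ[K] (↥(Finset.Ico n m) → K) where
  toFun x := fun i => (x : LaurentSeries K).coeff i
  map_add' x y := by ext i; simp
  map_smul' c x := by ext i; simp

@[simp] lemma coeffMap_apply (n m : ℤ) (x : ↥(standardLattice K n))
    (i : ↥(Finset.Ico n m)) : coeffMap n m x i = (x : LaurentSeries K).coeff i := rfl

lemma ker_coeffMap (n m : ℤ) :
    LinearMap.ker (coeffMap (K := K) n m) =
      (standardLattice K m).comap (standardLattice K n).subtype := by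
  ext x
  simp only [LinearMap.mem_ker, Submodule.mem_comap, Submodule.coe_subtype]
  constructor
  · intro hx
    intro j hj
    by_cases hjn : j < n
    · exact x.2 j hjn
    · push_neg at hjn
      exact congrFun hx ⟨j, Finset.mem_Ico.mpr ⟨hjn, hj⟩⟩
  · intro hx
    funext i
    exact hx i (Finset.mem_Ico.mp i.2).2

lemma surj_coeffMap (n m : ℤ) : Function.Surjective (coeffMap (K := K) n m) := by
  intro g
  refine ⟨⟨⟨fun j => if h : j ∈ Finset.Ico n m then g ⟨j, h⟩ else 0, ?_⟩, ?_⟩, ?_⟩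
  · apply Set.Finite.isPWO
    apply Set.Finite.subset (Finset.Ico n m).finite_toSet
    intro j hj
    simp only [Function.mem_support] at hj
    by_contra hmem
    rw [Finset.mem_coe] at hmem
    exact hj (dif_neg hmem)
  · intro j hj
    have : j ∉ Finset.Ico n m := by simp [Finset.mem_Ico]; omega
    exact dif_neg this
  · funext i
    exact dif_pos i.2

section AbstractQuotient2

variable {K : Type*} [Field K] {V : Type*} [AddCommGroup V] [Module K V]

noncomputable def quotEquivAux (p q : Submodule K V) {ι : Type*}
    (c : ↥p →ₗ[K] (ι → K)) (hker : LinearMap.ker c = q.comap p.subtype)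
    (hsurj : Function.Surjective c) :
    (↥p ⧸ q.comap p.subtype) ≃ₗ[K] (ι → K) :=
  LinearEquiv.ofBijective (Submodule.liftQ _ c hker.ge)
    ⟨by
      rw [← LinearMap.ker_eq_bot]
      exact Submodule.ker_liftQ_eq_bot _ _ _ hker.le,
     fun g => by
      obtain ⟨x, hx⟩ := hsurj g
      exact ⟨Submodule.Quotient.mk x, by simpa using hx⟩⟩

@[simp] lemma quotEquivAux_mk (p q : Submodule K V) {ι : Type*}
    (c : ↥p →ₗ[K] (ι → K)) (hker : LinearMap.ker c = q.comap p.subtype)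
    (hsurj : Function.Surjective c) (x : ↥p) :
    quotEquivAux p q c hker hsurj (Submodule.Quotient.mk x) = c x := by
  rfl

lemma quotFD_aux (p q : Submodule K V) {ι : Type*} [Finite ι]
    (c : ↥p →ₗ[K] (ι → K)) (hker : LinearMap.ker c = q.comap p.subtype)
    (hsurj : Function.Surjective c) :
    QuotFiniteDimensional p q :=
  Module.Finite.equiv (quotEquivAux p q c hker hsurj).symm

lemma trace_inducedQuotientEndo_eq_sum
    (f : Module.End K V) (p q : Submodule K V)
    (hr : ∀ v : V, f v ∈ p) (hk : ∀ v ∈ q, f v = 0)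
    {ι : Type*} [Fintype ι] [DecidableEq ι]
    (c : ↥p →ₗ[K] (ι → K)) (hker : LinearMap.ker c = q.comap p.subtype)
    (hsurj : Function.Surjective c)
    (s : ι → ↥p) (hs : ∀ i, c (s i) = Pi.single i 1) :
    LinearMap.trace K _ (inducedQuotientEndo f p q hr hk)
      = ∑ i, c (⟨f (s i), hr _⟩ : ↥p) i := by
  classical
  set E := quotEquivAux p q c hker hsurj with hE
  rw [← LinearMap.trace_conj' _ E]
  rw [LinearMap.trace_eq_matrix_trace K (Pi.basisFun K ι)]
  rw [Matrix.trace]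
  apply Finset.sum_congr rfl
  intro i _
  have hsymm : E.symm (Pi.single i 1) = Submodule.Quotient.mk (s i) := by
    rw [LinearEquiv.symm_apply_eq, hE, quotEquivAux_mk, hs]
  rw [Matrix.diag_apply, LinearMap.toMatrix_apply, Pi.basisFun_repr, Pi.basisFun_apply,
    LinearEquiv.conj_apply, LinearMap.comp_apply, LinearMap.comp_apply,
    LinearEquiv.coe_coe, LinearEquiv.coe_coe, hsymm]
  rw [inducedQuotientEndo, Submodule.mapQ_apply, hE, quotEquivAux_mk]
  congr

end AbstractQuotient2

lemma trace_concrete (f : Module.End K (LaurentSeries K)) (n m : ℤ)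
    (hr : ∀ v : LaurentSeries K, f v ∈ standardLattice K n)
    (hk : ∀ v ∈ standardLattice K m, f v = 0) :
    LinearMap.trace K _
        (inducedQuotientEndo f (standardLattice K n) (standardLattice K m) hr hk)
      = ∑ i ∈ Finset.Ico n m, (f (HahnSeries.single i 1)).coeff i := by
  classical
  rw [trace_inducedQuotientEndo_eq_sum f _ _ hr hk (coeffMap n m) (ker_coeffMap n m)
    (surj_coeffMap n m)
    (fun i => ⟨HahnSeries.single (i : ℤ) 1,
      single_mem_standardLattice (Finset.mem_Ico.mp i.2).1⟩)
    ?_]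
  · rw [← Finset.sum_coe_sort (Finset.Ico n m)
      (fun i => (f (HahnSeries.single i 1)).coeff i)]
    exact Finset.sum_congr rfl fun i _ => rfl
  · intro i
    funext j
    simp only [coeffMap_apply, HahnSeries.coeff_single, Pi.single_apply, Subtype.ext_iff]
    split <;> rfl


end Helpers

/-- Suppose `f` is a `k`-linear endomorphism of `k((t))` and `n₁ ≤ m₁`, `n₂ ≤ m₂` are
integers such that the range of `f` is contained in `L nᵢ` and `L mᵢ` is contained in the
kernel of `f`.  Then the quotients `L nᵢ / L mᵢ` are finite-dimensional, `f` induces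
endomorphisms on them, and the ordinary traces of the two induced endomorphisms agree.
Consequently the Tate trace `τ(f)` is well defined. -/
theorem trace_inducedQuotientEndo_welldefined
    (f : Module.End k (LaurentSeries k)) (n₁ m₁ n₂ m₂ : ℤ)
    (h₁ : n₁ ≤ m₁) (h₂ : n₂ ≤ m₂)
    (hr₁ : ∀ v : LaurentSeries k, f v ∈ standardLattice k n₁)
    (hk₁ : ∀ v ∈ standardLattice k m₁, f v = 0)
    (hr₂ : ∀ v : LaurentSeries k, f v ∈ standardLattice k n₂)
    (hk₂ : ∀ v ∈ standardLattice k m₂, f v = 0) :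
    QuotFiniteDimensional (standardLattice k n₁) (standardLattice k m₁) ∧
    QuotFiniteDimensional (standardLattice k n₂) (standardLattice k m₂) ∧
    LinearMap.trace k _
        (inducedQuotientEndo f (standardLattice k n₁) (standardLattice k m₁) hr₁ hk₁) =
      LinearMap.trace k _
        (inducedQuotientEndo f (standardLattice k n₂) (standardLattice k m₂) hr₂ hk₂) := by
  classical
  refine ⟨quotFD_aux _ _ (coeffMap n₁ m₁) (ker_coeffMap n₁ m₁) (surj_coeffMap n₁ m₁),
          quotFD_aux _ _ (coeffMap n₂ m₂) (ker_coeffMap n₂ m₂) (surj_coeffMap n₂ m₂), ?_⟩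
  rw [trace_concrete f n₁ m₁ hr₁ hk₁, trace_concrete f n₂ m₂ hr₂ hk₂]
  set c : ℤ → k := fun i => (f (HahnSeries.single i 1)).coeff i with hc
  have hz : ∀ (n m i : ℤ), (∀ v : LaurentSeries k, f v ∈ standardLattice k n) →
      (∀ v ∈ standardLattice k m, f v = 0) → (i < n ∨ m ≤ i) → c i = 0 := by
    intro n m i hr hk hi
    rcases hi with hi | hi
    · exact hr (HahnSeries.single i 1) i hi
    · rw [hc]
      simp only
      rw [hk _ (single_mem_standardLattice hi)]
      simp
  have e₁ : ∑ i ∈ Finset.Ico n₁ m₁ ∩ Finset.Ico n₂ m₂, c i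
      = ∑ i ∈ Finset.Ico n₁ m₁, c i := by
    apply Finset.sum_subset Finset.inter_subset_left
    intro x hx hnx
    apply hz n₂ m₂ x hr₂ hk₂
    simp only [Finset.mem_inter, Finset.mem_Ico] at hx hnx
    omega
  have e₂ : ∑ i ∈ Finset.Ico n₁ m₁ ∩ Finset.Ico n₂ m₂, c i
      = ∑ i ∈ Finset.Ico n₂ m₂, c i := by
    rw [Finset.inter_comm]
    apply Finset.sum_subset Finset.inter_subset_left
    intro x hx hnx
    apply hz n₁ m₁ x hr₁ hk₁
    simp only [Finset.mem_inter, Finset.mem_Ico] at hx hnx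
    omega
  rw [← e₁, ← e₂]
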